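/- arXiv:quant-ph/0403031 — 2 statements merged into one kernel-verified Lean document; each statement's English description precedes it below -/
import Mathlib

section
/- If Ψ = (α* a_κ + β* a_λ) a_κ† a_λ† |0⟩ with κ, λ orthonormal, and φ = α κ + β λ + Σ_i c_i ν_i with ν_i orthonormal to κ and λ, then the annihilation operator a(φ) annihilates Ψ: a(φ) Ψ = 0. -/
/-- A representation of the canonical anticommutation relations (CAR) over a complex
inner product space `H` of single-particle states, on a complex inner product space `F`
(the Fock space), with creation operators `cre φ` (linear in `φ`), annihilation operators
`ann φ` (antilinear in `φ`), a cyclic vacuum vector `vac` of unit norm, and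
`ann φ` adjoint to `cre φ`. -/
structure CARRep (H : Type*) [NormedAddCommGroup H] [InnerProductSpace ℂ H]
    (F : Type*) [NormedAddCommGroup F] [InnerProductSpace ℂ F] where
  cre : H →ₗ[ℂ] F →ₗ[ℂ] F
  ann : H → F →ₗ[ℂ] F
  ann_add : ∀ φ ψ, ann (φ + ψ) = ann φ + ann ψ
  ann_smul : ∀ (c : ℂ) (φ), ann (c • φ) = (starRingEnd ℂ c) • ann φ
  cre_anticomm : ∀ φ ψ, cre φ ∘ₗ cre ψ + cre ψ ∘ₗ cre φ = 0
  ann_anticomm : ∀ φ ψ, ann φ ∘ₗ ann ψ + ann ψ ∘ₗ ann φ = 0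
  mixed_anticomm : ∀ φ ψ, ann φ ∘ₗ cre ψ + cre ψ ∘ₗ ann φ = (inner ℂ φ ψ : ℂ) • LinearMap.id
  vac : F
  vac_norm : ‖vac‖ = 1
  ann_vac : ∀ φ, ann φ vac = 0
  adjoint_rel : ∀ φ x y, (inner ℂ (cre φ x) y : ℂ) = inner ℂ x (ann φ y)

namespace CARRep

variable {H : Type*} [NormedAddCommGroup H] [InnerProductSpace ℂ H]
  {F : Type*} [NormedAddCommGroup F] [InnerProductSpace ℂ F]

/-- The Slater-determinant state `a†(v 1) ⋯ a†(v N) |0⟩`. -/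
noncomputable def slater (R : CARRep H F) {N : ℕ} (v : Fin N → H) : F :=
  ((List.ofFn fun i => R.cre (v i)).prod : F →ₗ[ℂ] F) R.vac

end CARRep

open CARRep in
/-- Case 2 of the no-single-term lemma: if
`Ψ = (α* a_κ + β* a_l) a_κ† a_l† |0⟩` with `κ, l` orthonormal and
`φ = α κ + β l + ∑ i, c i • ν i` with the `ν i` orthonormal to `κ` and `l`, then
the annihilation operator `a(φ)` annihilates `Ψ`. -/
theorem annihilation_annihilates_matched_state {H : Type*} [NormedAddCommGroup H]
    [InnerProductSpace ℂ H] {F : Type*} [NormedAddCommGroup F] [InnerProductSpace ℂ F]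
    (R : CARRep H F) (κ l : H) {k : ℕ} (ν : Fin k → H)
    (hκ : ‖κ‖ = 1) (hl : ‖l‖ = 1) (hκl : (inner ℂ κ l : ℂ) = 0)
    (hν : Orthonormal ℂ ν)
    (hκν : ∀ i, (inner ℂ κ (ν i) : ℂ) = 0) (hlν : ∀ i, (inner ℂ l (ν i) : ℂ) = 0)
    (α β : ℂ) (c : Fin k → ℂ) (φ : H)
    (hφ : φ = α • κ + β • l + ∑ i, c i • ν i)
    (Ψ : F) (hΨ : Ψ = R.ann (α • κ + β • l) (R.cre κ (R.cre l R.vac))) :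
    R.ann φ Ψ = 0 := by

  have key : ∀ (χ ψ : H) (x : F),
      R.ann χ (R.cre ψ x) = (inner ℂ χ ψ : ℂ) • x - R.cre ψ (R.ann χ x) := by
    intro χ ψ x
    have h := congrArg (fun T : F →ₗ[ℂ] F => T x) (R.mixed_anticomm χ ψ)
    simp only [LinearMap.add_apply, LinearMap.comp_apply, LinearMap.smul_apply,
      LinearMap.id_apply] at h
    exact eq_sub_of_add_eq h
  have hκκ : (inner ℂ κ κ : ℂ) = 1 := by
    rw [inner_self_eq_norm_sq_to_K, hκ]; norm_num
  have hll : (inner ℂ l l : ℂ) = 1 := by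
    rw [inner_self_eq_norm_sq_to_K, hl]; norm_num
  have hlκ : (inner ℂ l κ : ℂ) = 0 := by
    rw [← inner_conj_symm, hκl, map_zero]
  have hνl : ∀ i, (inner ℂ (ν i) l : ℂ) = 0 := fun i => by
    rw [← inner_conj_symm, hlν i, map_zero]
  have hνκ : ∀ i, (inner ℂ (ν i) κ : ℂ) = 0 := fun i => by
    rw [← inner_conj_symm, hκν i, map_zero]
  have hφl : (inner ℂ φ l : ℂ) = starRingEnd ℂ β := by
    rw [hφ, inner_add_left, inner_add_left, sum_inner]
    simp [inner_smul_left, hκl, hll, hνl, hl]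
  have hφκ : (inner ℂ φ κ : ℂ) = starRingEnd ℂ α := by
    rw [hφ, inner_add_left, inner_add_left, sum_inner]
    simp [inner_smul_left, hκκ, hlκ, hνκ, hκ]
  have hΨ' : Ψ = (starRingEnd ℂ α) • R.cre l R.vac - (starRingEnd ℂ β) • R.cre κ R.vac := by
    rw [hΨ, R.ann_add, R.ann_smul, R.ann_smul]
    simp only [LinearMap.add_apply, LinearMap.smul_apply]
    rw [key, key, key, key]
    simp [R.ann_vac, hκκ, hκl, hlκ, hll, sub_eq_add_neg, hκ, hl]
  rw [hΨ', map_sub, map_smul, map_smul, key, key, R.ann_vac, hφl, hφκ]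
  simp [smul_comm (starRingEnd ℂ α) (starRingEnd ℂ β)]
end

section
/- Let v_1,...,v_N be orthonormal vectors in a complex Hilbert space H, κ a unit vector, and decompose κ = α·u + β·w with u a unit vector in S = span(v_1,...,v_N), w a unit vector in S^⊥, α, β ≥ 0. Then in the fermionic Fock space, P_1 Ψ = α · a_κ† a_{μ_2}† ⋯ a_{μ_N}† |0⟩, where Ψ = a_{v_1}†⋯a_{v_N}†|0⟩ (up to a phase), P_1 = a_κ† a_κ, and μ_2,...,μ_N is any orthonormal basis of the orthogonal complement of u inside S chosen so that u ∧ μ_2 ∧ ... ∧ μ_N = v_1 ∧ ... ∧ v_N. In particular ‖P_1 Ψ‖² = α², and P_1 Ψ is a single Slater determinant. -/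
namespace CARRep

variable {H : Type*} [NormedAddCommGroup H] [InnerProductSpace ℂ H]
  {F : Type*} [NormedAddCommGroup F] [InnerProductSpace ℂ F]

variable (R : CARRep H F)

lemma ann_cre (φ ψ : H) (x : F) :
    R.ann φ (R.cre ψ x) = (inner ℂ φ ψ : ℂ) • x - R.cre ψ (R.ann φ x) := by
  have h := congrArg (fun L : F →ₗ[ℂ] F => L x) (R.mixed_anticomm φ ψ)
  simp only [LinearMap.add_apply, LinearMap.comp_apply, LinearMap.smul_apply,
    LinearMap.id_apply] at h
  exact eq_sub_iff_add_eq.mpr h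

lemma slater_nil (v : Fin 0 → H) : R.slater v = R.vac := by
  simp [CARRep.slater]

lemma slater_succ {n : ℕ} (v : Fin (n + 1) → H) :
    R.slater v = R.cre (v 0) (R.slater (Fin.tail v)) := by
  simp [CARRep.slater, List.ofFn_succ, Fin.tail]

lemma ann_slater_eq_zero {n : ℕ} (φ : H) (v : Fin n → H)
    (h : ∀ i, (inner ℂ φ (v i) : ℂ) = 0) : R.ann φ (R.slater v) = 0 := by
  induction n with
  | zero => rw [slater_nil]; exact R.ann_vac φ
  | succ n ih =>
      rw [slater_succ, ann_cre, h 0, ih (Fin.tail v) (fun i => h i.succ)]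
      simp

lemma inner_slater_self {n : ℕ} (v : Fin n → H) (hv : Orthonormal ℂ v) :
    (inner ℂ (R.slater v) (R.slater v) : ℂ) = 1 := by
  induction n with
  | zero =>
      rw [slater_nil, @inner_self_eq_norm_sq_to_K ℂ, R.vac_norm]
      norm_num
  | succ n ih =>
      have htail : Orthonormal ℂ (Fin.tail v) :=
        hv.comp Fin.succ (Fin.succ_injective n)
      have hann : R.ann (v 0) (R.slater (Fin.tail v)) = 0 := by
        refine ann_slater_eq_zero R (v 0) (Fin.tail v) (fun i => ?_)
        exact hv.2 (Fin.succ_ne_zero i).symm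
      rw [slater_succ, R.adjoint_rel, ann_cre, hann]
      simp only [map_zero, sub_zero, inner_smul_right]
      rw [ih _ htail, @inner_self_eq_norm_sq_to_K ℂ, hv.1 0]
      norm_num

lemma norm_slater {n : ℕ} (v : Fin n → H) (hv : Orthonormal ℂ v) :
    ‖R.slater v‖ = 1 := by
  have h := inner_slater_self R v hv
  rw [@inner_self_eq_norm_sq_to_K ℂ] at h
  rw [← RCLike.ofReal_pow] at h
  have : ‖R.slater v‖ ^ 2 = 1 := by rw [← RCLike.ofReal_one] at h; exact RCLike.ofReal_inj.mp h
  nlinarith [norm_nonneg (R.slater v)]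

end CARRep

open CARRep in
/-- Occupied-outcome single-mode measurement: with `κ = α u + β w`, `u` a unit vector in
`S = span (v 1, …, v N)`, `w` a unit vector in `Sᗮ`, and `μ 2, …, μ N` an orthonormal
family in `S` orthogonal to `u` with `a_u† a_{μ}† ⋯ |0⟩ = a_{v₁}† ⋯ a_{v_N}† |0⟩`, the
projector `P₁ = a_κ† a_κ` maps the Slater determinant `Ψ` to
`α • a_κ† a_{μ₂}† ⋯ a_{μ_N}† |0⟩`; in particular `‖P₁ Ψ‖² = α²` and `P₁ Ψ` is again a
single Slater determinant. -/
theorem P1_single_mode_on_slater {H : Type*} [NormedAddCommGroup H] [InnerProductSpace ℂ H]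
    {F : Type*} [NormedAddCommGroup F] [InnerProductSpace ℂ F]
    (R : CARRep H F) {N : ℕ} (hN : 1 ≤ N) (v : Fin N → H) (hv : Orthonormal ℂ v)
    (S : Submodule ℂ H) (hS : S = Submodule.span ℂ (Set.range v))
    (κ u w : H) (hκn : ‖κ‖ = 1) (hun : ‖u‖ = 1) (hwn : ‖w‖ = 1)
    (hu : u ∈ S) (hw : w ∈ Sᗮ)
    (α β : ℝ) (hα : 0 ≤ α) (hβ : 0 ≤ β) (hαβ : α ^ 2 + β ^ 2 = 1)
    (hκ : κ = (α : ℂ) • u + (β : ℂ) • w)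
    (μ : Fin (N - 1) → H) (hμ : Orthonormal ℂ μ) (hμS : ∀ i, μ i ∈ S)
    (hμu : ∀ i, (inner ℂ u (μ i) : ℂ) = 0)
    (hwedge : R.cre u (R.slater μ) = R.slater v)
    (P1 : F →ₗ[ℂ] F) (hP1 : P1 = R.cre κ ∘ₗ R.ann κ) :
    P1 (R.slater v) = (α : ℂ) • R.cre κ (R.slater μ) ∧
    ‖P1 (R.slater v)‖ ^ 2 = α ^ 2 := by
  -- key inner products
  have huw : (inner ℂ u w : ℂ) = 0 := hw u hu
  have hwu : (inner ℂ w u : ℂ) = 0 := by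
    rw [← inner_conj_symm, huw, map_zero]
  have hwμ : ∀ i, (inner ℂ w (μ i) : ℂ) = 0 := fun i => by
    rw [← inner_conj_symm, hw (μ i) (hμS i), map_zero]
  have huu : (inner ℂ u u : ℂ) = 1 := by
    rw [@inner_self_eq_norm_sq_to_K ℂ, hun]; norm_num
  -- annihilators kill slater μ
  have hannu : R.ann u (R.slater μ) = 0 := R.ann_slater_eq_zero u μ hμu
  have hannw : R.ann w (R.slater μ) = 0 := R.ann_slater_eq_zero w μ hwμ
  have hκμ : ∀ i, (inner ℂ κ (μ i) : ℂ) = 0 := by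
    intro i
    rw [hκ, inner_add_left, inner_smul_left, inner_smul_left, hμu i, hwμ i]
    simp
  have hannκ : R.ann κ (R.slater μ) = 0 := R.ann_slater_eq_zero κ μ hκμ
  -- ann κ on Ψ
  have hκann : R.ann κ = (α : ℂ) • R.ann u + (β : ℂ) • R.ann w := by
    rw [hκ, R.ann_add, R.ann_smul, R.ann_smul, Complex.conj_ofReal, Complex.conj_ofReal]
  have hannΨ : R.ann κ (R.slater v) = (α : ℂ) • R.slater μ := by
    rw [← hwedge, hκann]
    simp only [LinearMap.add_apply, LinearMap.smul_apply]
    rw [R.ann_cre u u, R.ann_cre w u, huu, hwu, hannu, hannw]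
    simp
  have hmain : P1 (R.slater v) = (α : ℂ) • R.cre κ (R.slater μ) := by
    rw [hP1, LinearMap.comp_apply, hannΨ, map_smul]
  refine ⟨hmain, ?_⟩
  -- norm computation
  have hκκ : (inner ℂ κ κ : ℂ) = 1 := by
    rw [@inner_self_eq_norm_sq_to_K ℂ, hκn]; norm_num
  have hinner : (inner ℂ (R.cre κ (R.slater μ)) (R.cre κ (R.slater μ)) : ℂ) = 1 := by
    rw [R.adjoint_rel, R.ann_cre, hκκ, hannκ]
    simp only [map_zero, sub_zero, one_smul]
    exact R.inner_slater_self μ hμ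
  have hnorm : ‖R.cre κ (R.slater μ)‖ = 1 := by
    rw [@inner_self_eq_norm_sq_to_K ℂ] at hinner
    rw [← RCLike.ofReal_pow] at hinner
    have h2 : ‖R.cre κ (R.slater μ)‖ ^ 2 = 1 := by rw [← RCLike.ofReal_one] at hinner; exact RCLike.ofReal_inj.mp hinner
    nlinarith [norm_nonneg (R.cre κ (R.slater μ))]
  rw [hmain, norm_smul, hnorm]
  simp [abs_of_nonneg hα, mul_pow]
end
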